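/- Let (Ω, μ) be a finite measure space and let θ_n : Ω → ℝ be a sequence of μ-integrable functions such that: (a) liminf_n θ_n(t) ≥ 0 for μ-almost every t ∈ Ω; (b) limsup_n ∫_Ω θ_n dμ ≤ 0; (c) the negative parts θ_n⁻ = max(−θ_n, 0) form a uniformly integrable family, i.e. sup_n ∫_Ω θ_n⁻ dμ < ∞ and for every δ > 0 there exists η > 0 such that μ(E) < η implies ∫_E θ_n⁻ dμ < δ for all n. Then θ_n → 0 in L¹(μ), i.e. ∫_Ω |θ_n| dμ → 0 as n → ∞. -/

import Mathlib

/- STATEMENT 7: an extended dominated convergence result: if liminf θ_n ≥ 0 a.e.,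
limsup ∫ θ_n ≤ 0, and the negative parts θ_n⁻ = max(−θ_n, 0) are uniformly
integrable, then θ_n → 0 in L¹(μ).  The liminf/limsup are taken in the extended
reals so that the inequalities have their genuine unbounded meaning. -/

open MeasureTheory Filter Topology
open scoped ENNReal NNReal

theorem statement_7
    {Ω : Type*} [MeasurableSpace Ω] (μ : Measure Ω) [IsFiniteMeasure μ]
    (θ : ℕ → Ω → ℝ)
    (hint : ∀ n, Integrable (θ n) μ)
    -- (a) liminf_n θ_n(t) ≥ 0 for μ-a.e. t
    (ha : ∀ᵐ t ∂μ, (0 : EReal) ≤ liminf (fun n => ((θ n t : ℝ) : EReal)) atTop)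
    -- (b) limsup_n ∫ θ_n dμ ≤ 0
    (hb : limsup (fun n => ((∫ t, θ n t ∂μ : ℝ) : EReal)) atTop ≤ 0)
    -- (c) the negative parts form a uniformly integrable family:
    -- sup_n ∫ θ_n⁻ dμ < ∞ ...
    (hsup : ∃ C : ℝ, ∀ n, ∫ t, max (-(θ n t)) 0 ∂μ ≤ C)
    -- ... and ∀ δ > 0 ∃ η > 0 such that μ(E) < η implies ∫_E θ_n⁻ dμ < δ for all n
    (hui : ∀ δ : ℝ, 0 < δ → ∃ η : ℝ, 0 < η ∧ ∀ E : Set Ω, MeasurableSet E →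
      μ E < ENNReal.ofReal η → ∀ n, ∫ t in E, max (-(θ n t)) 0 ∂μ < δ) :
    Tendsto (fun n => ∫ t, |θ n t| ∂μ) atTop (nhds 0) := by
  set f : ℕ → Ω → ℝ := fun n t => max (-(θ n t)) 0 with hf_def
  have hf_nonneg : ∀ n t, 0 ≤ f n t := fun n t => le_max_right _ _
  have hf_int : ∀ n, Integrable (f n) μ := fun n => (hint n).neg_part
  -- key identity for eLpNorm of indicator
  have key : ∀ n (s : Set Ω), MeasurableSet s →
      eLpNorm (s.indicator (f n)) 1 μ = ENNReal.ofReal (∫ t in s, f n t ∂μ) := by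
    intro n s hs
    rw [eLpNorm_one_eq_lintegral_enorm]
    have h1 : ∀ a, (‖s.indicator (f n) a‖ₑ : ℝ≥0∞)
        = s.indicator (fun a => (‖f n a‖ₑ : ℝ≥0∞)) a := by
      intro a
      by_cases h : a ∈ s <;> simp [Set.indicator_of_mem, Set.indicator_of_notMem, h]
    simp_rw [h1]
    rw [lintegral_indicator hs,
      MeasureTheory.ofReal_integral_eq_lintegral_ofReal ((hf_int n).restrict)
        (Eventually.of_forall fun t => hf_nonneg n t)]
    refine lintegral_congr fun a => ?_
    rw [Real.enorm_eq_ofReal (hf_nonneg n a)]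
  -- uniform integrability of the negative parts
  have hui' : UnifIntegrable f 1 μ := by
    intro ε hε
    obtain ⟨η, hη, hE⟩ := hui ε hε
    refine ⟨η / 2, half_pos hη, fun i s hs hμs => ?_⟩
    rw [key i s hs]
    refine ENNReal.ofReal_le_ofReal (le_of_lt (hE s hs ?_ i))
    exact lt_of_le_of_lt hμs ((ENNReal.ofReal_lt_ofReal_iff hη).mpr (half_lt_self hη))
  -- a.e. pointwise convergence of the negative parts to 0
  have hae : ∀ᵐ t ∂μ, Tendsto (fun n => f n t) atTop (𝓝 0) := by
    filter_upwards [ha] with t ht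
    rw [Metric.tendsto_atTop]
    intro ε hε
    have hlt : ((-ε : ℝ) : EReal) < liminf (fun n => ((θ n t : ℝ) : EReal)) atTop := by
      refine lt_of_lt_of_le ?_ ht
      exact_mod_cast neg_lt_zero.mpr hε
    have h1 := eventually_lt_of_lt_liminf hlt
    rw [eventually_atTop] at h1
    obtain ⟨N, hN⟩ := h1
    refine ⟨N, fun n hn => ?_⟩
    have h2 : -ε < θ n t := by exact_mod_cast hN n hn
    rw [Real.dist_eq, sub_zero, abs_of_nonneg (hf_nonneg n t)]
    exact max_lt (by linarith) hε
  -- Vitali: ∫ f n → 0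
  have hglim : Tendsto (fun n => ∫ t, f n t ∂μ) atTop (𝓝 0) := by
    have hT := tendsto_Lp_finite_of_tendsto_ae (μ := μ) le_rfl
      (by simp : (1 : ℝ≥0∞) ≠ ∞) (fun n => (hf_int n).aestronglyMeasurable)
      (MemLp.zero' : MemLp (fun _ : Ω => (0 : ℝ)) 1 μ) hui' hae
    have hT' : Tendsto (fun n => eLpNorm (f n) 1 μ) atTop (𝓝 0) := by
      refine hT.congr fun n => ?_
      congr 1
      ext t
      simp
    have hT'' := (ENNReal.tendsto_toReal (by simp)).comp hT'
    refine hT''.congr fun n => ?_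
    have := key n Set.univ MeasurableSet.univ
    rw [Set.indicator_univ, Measure.restrict_univ] at this
    simp only [Function.comp_apply, this,
      ENNReal.toReal_ofReal (integral_nonneg (hf_nonneg n))]
  -- lower bound for ∫ θ n
  have hlow : ∀ n, -(∫ t, f n t ∂μ) ≤ ∫ t, θ n t ∂μ := by
    intro n
    rw [← integral_neg]
    refine integral_mono (hf_int n).neg (hint n) fun t => ?_
    simp only [hf_def, Pi.neg_apply, neg_le]
    exact le_max_left _ _
  -- ∫ θ n → 0
  have hint0 : Tendsto (fun n => ∫ t, θ n t ∂μ) atTop (𝓝 0) := by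
    rw [Metric.tendsto_atTop]
    intro ε hε
    rw [Metric.tendsto_atTop] at hglim
    obtain ⟨N1, hN1⟩ := hglim ε hε
    have hub : ∀ᶠ n in atTop, ((∫ t, θ n t ∂μ : ℝ) : EReal) < ((ε : ℝ) : EReal) :=
      eventually_lt_of_limsup_lt (lt_of_le_of_lt hb (by exact_mod_cast hε))
    rw [eventually_atTop] at hub
    obtain ⟨N2, hN2⟩ := hub
    refine ⟨max N1 N2, fun n hn => ?_⟩
    have h1 : ∫ t, f n t ∂μ < ε := by
      have := hN1 n (le_trans (le_max_left _ _) hn)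
      rwa [Real.dist_eq, sub_zero, abs_of_nonneg (integral_nonneg (hf_nonneg n))] at this
    have h2 : ∫ t, θ n t ∂μ < ε := by
      exact_mod_cast hN2 n (le_trans (le_max_right _ _) hn)
    rw [Real.dist_eq, sub_zero, abs_lt]
    exact ⟨lt_of_lt_of_le (by linarith) (hlow n), h2⟩
  -- |θ n t| = θ n t + 2 * f n t
  have habs : ∀ n, ∫ t, |θ n t| ∂μ = (∫ t, θ n t ∂μ) + 2 * ∫ t, f n t ∂μ := by
    intro n
    rw [← MeasureTheory.integral_const_mul, ← integral_add (hint n) ((hf_int n).const_mul 2)]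
    refine integral_congr_ae (Eventually.of_forall fun t => ?_)
    simp only [hf_def]
    rcases le_total 0 (θ n t) with h | h
    · rw [abs_of_nonneg h, max_eq_right (by linarith)]; ring
    · rw [abs_of_nonpos h, max_eq_left (by linarith)]; ring
  simp_rw [habs]
  simpa using hint0.add (hglim.const_mul 2)
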